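/- Conversely, if u is a draw from a (κ, X^{s,q}) measure and t ≥ s - d/q, then ‖u‖_{X^{t,q}} = ∞ almost surely. -/

import Mathlib

open MeasureTheory Real ProbabilityTheory Filter Topology
open scoped ENNReal

/-- Deterministic lemma: if the Cesàro averages of a nonnegative sequence `Y` tend to a
positive limit `p`, then `∑ Y n / (n+1)` diverges. -/
lemma not_summable_of_cesaro {Y : ℕ → ℝ} {p : ℝ} (hp : 0 < p)
    (hY : ∀ n, 0 ≤ Y n)
    (h : Tendsto (fun N : ℕ => (∑ i ∈ Finset.range N, Y i) / N) atTop (𝓝 p)) :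
    ¬ Summable (fun n : ℕ => ((n : ℝ) + 1)⁻¹ * Y n) := by
  intro hsum
  set f : ℕ → ℝ := fun n => ((n : ℝ) + 1)⁻¹ * Y n with hf
  set S : ℕ → ℝ := fun N => ∑ i ∈ Finset.range N, Y i with hS
  -- partial sums of f converge
  have hpart : Tendsto (fun N : ℕ => ∑ i ∈ Finset.range N, f i) atTop (𝓝 (∑' n, f n)) :=
    hsum.hasSum.tendsto_sum_nat
  have h2 : Tendsto (fun N : ℕ => ∑ i ∈ Finset.range (2 * N), f i) atTop (𝓝 (∑' n, f n)) :=
    hpart.comp (tendsto_id.const_mul_atTop' (by norm_num))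
  have hT : Tendsto (fun N : ℕ => ∑ i ∈ Finset.Ico N (2 * N), f i) atTop (𝓝 0) := by
    have := h2.sub hpart
    simp only [sub_self] at this
    convert this using 2 with N
    rw [Finset.sum_Ico_eq_sub _ (by omega), eq_comm]
  -- the lower bound tends to p/2
  have h2N : Tendsto (fun N : ℕ => S (2 * N) / (2 * N : ℕ)) atTop (𝓝 p) :=
    h.comp (tendsto_id.const_mul_atTop' (by norm_num))
  have hhalf : Tendsto (fun N : ℕ => S N / N / 2) atTop (𝓝 (p / 2)) := h.div_const 2
  have hlow : Tendsto (fun N : ℕ => S (2 * N) / (2 * N : ℕ) - S N / N / 2) atTop (𝓝 (p / 2)) := by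
    have h' := h2N.sub hhalf
    rw [show p - p / 2 = p / 2 by ring] at h'
    exact h'
  have hle : ∀ᶠ N : ℕ in atTop, S (2 * N) / (2 * N : ℕ) - S N / N / 2
      ≤ ∑ i ∈ Finset.Ico N (2 * N), f i := by
    filter_upwards [eventually_ge_atTop 1] with N hN
    have hNpos : (0 : ℝ) < (N : ℝ) := by exact_mod_cast hN
    have h2Npos : (0 : ℝ) < ((2 * N : ℕ) : ℝ) := by positivity
    have key : S (2 * N) / (2 * N : ℕ) - S N / N / 2
        = (∑ i ∈ Finset.Ico N (2 * N), Y i) / ((2 * N : ℕ) : ℝ) := by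
      rw [Finset.sum_Ico_eq_sub _ (by omega)]
      push_cast
      field_simp [hS]
      ring
    rw [key, Finset.sum_div]
    apply Finset.sum_le_sum
    intro i hi
    simp only [Finset.mem_Ico] at hi
    have hi1 : (i : ℝ) + 1 ≤ ((2 * N : ℕ) : ℝ) := by
      have : i + 1 ≤ 2 * N := hi.2
      exact_mod_cast this
    rw [div_eq_mul_inv, mul_comm]
    apply mul_le_mul_of_nonneg_right _ (hY i)
    exact inv_anti₀ (by positivity) hi1
  have : p / 2 ≤ 0 := le_of_tendsto_of_tendsto hlow hT hle
  linarith

/-- conversely, if t ≥ s - d/q then ‖u‖_{X^{t,q}} = ∞ almost surely,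
i.e. the defining series diverges a.s. -/
theorem besov_norm_infinite_as
    {Ω : Type*} [MeasurableSpace Ω] (P : Measure Ω) [IsProbabilityMeasure P]
    (q s t κ : ℝ) (d : ℕ) (hd : 1 ≤ d) (hq : 1 ≤ q) (hs : 0 < s) (hκ : 0 < κ)
    (ht : s - (d : ℝ) / q ≤ t)
    (c : ℝ) (hc : 0 < c)
    (ξ : ℕ → Ω → ℝ) (hmeas : ∀ l, Measurable (ξ l))
    (hindep : iIndepFun ξ P)
    (hdens : ∀ l, Measure.map (ξ l) P
      = volume.withDensity (fun x => ENNReal.ofReal (c * Real.exp (-(|x| ^ q) / 2)))) :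
    ∀ᵐ ω ∂P, ¬ Summable (fun n : ℕ =>
      ((n : ℝ) + 1) ^ (t * q / (d : ℝ) + q / 2 - 1) *
        |((n : ℝ) + 1) ^ (-(s / (d : ℝ) + 1 / 2 - 1 / q)) * κ ^ (-(1 / q)) * ξ n ω| ^ q) := by
  have hq0 : (0 : ℝ) < q := by linarith
  have hd0 : (0 : ℝ) < d := by exact_mod_cast hd
  -- the Bernoulli variables
  set g : ℝ → ℝ := fun x => if 1 ≤ |x| then 1 else 0 with hg
  have hAm : MeasurableSet {x : ℝ | 1 ≤ |x|} :=
    (isClosed_le continuous_const continuous_abs).measurableSet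
  have hgm : Measurable g := Measurable.ite hAm measurable_const measurable_const
  set Y : ℕ → Ω → ℝ := fun n ω => g (ξ n ω) with hY
  have hYm : ∀ n, Measurable (Y n) := fun n => hgm.comp (hmeas n)
  have hYnn : ∀ n ω, 0 ≤ Y n ω := by
    intro n ω; simp only [hY, hg]; split <;> norm_num
  have hYle : ∀ n ω, Y n ω ≤ 1 := by
    intro n ω; simp only [hY, hg]; split <;> norm_num
  have hint : Integrable (Y 0) P := by
    apply Integrable.mono' (integrable_const (1 : ℝ)) (hYm 0).aestronglyMeasurable
    filter_upwards with ω
    rw [Real.norm_eq_abs, abs_of_nonneg (hYnn 0 ω)]; exact hYle 0 ω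
  have hidξ : ∀ i, IdentDistrib (ξ i) (ξ 0) P P := fun i =>
    ⟨(hmeas i).aemeasurable, (hmeas 0).aemeasurable, by rw [hdens i, hdens 0]⟩
  have hident : ∀ i, IdentDistrib (Y i) (Y 0) P P := fun i => (hidξ i).comp hgm
  have hpind : Pairwise (Function.onFun (IndepFun · · P) Y) := fun i j hij =>
    (hindep.indepFun hij).comp hgm hgm
  -- the mean is positive
  have hYind : Y 0 = Set.indicator ((ξ 0) ⁻¹' {x : ℝ | 1 ≤ |x|}) (fun _ => (1 : ℝ)) := by
    funext ω
    by_cases h : 1 ≤ |ξ 0 ω| <;>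
      simp [hY, hg, Set.indicator_apply, Set.mem_preimage, Set.mem_setOf_eq, h]
  have hmean : P[Y 0] = (P ((ξ 0) ⁻¹' {x : ℝ | 1 ≤ |x|})).toReal := by
    rw [hYind, integral_indicator_const (1 : ℝ) ((hmeas 0) hAm)]
    simp [Measure.real]
  have hPpos : 0 < P ((ξ 0) ⁻¹' {x : ℝ | 1 ≤ |x|}) := by
    have hmap : P ((ξ 0) ⁻¹' {x : ℝ | 1 ≤ |x|})
        = (Measure.map (ξ 0) P) {x : ℝ | 1 ≤ |x|} := by
      rw [Measure.map_apply (hmeas 0) hAm]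
    rw [hmap, hdens 0, withDensity_apply _ hAm]
    have hsub : Set.Icc (1 : ℝ) 2 ⊆ {x : ℝ | 1 ≤ |x|} := by
      intro x hx
      simp only [Set.mem_setOf_eq]
      rw [abs_of_nonneg (by linarith [hx.1])]
      exact hx.1
    have h1 : (∫⁻ x in Set.Icc (1 : ℝ) 2,
        ENNReal.ofReal (c * Real.exp (-(|x| ^ q) / 2)) ∂volume)
        ≤ ∫⁻ x in {x : ℝ | 1 ≤ |x|},
        ENNReal.ofReal (c * Real.exp (-(|x| ^ q) / 2)) ∂volume :=
      lintegral_mono_set hsub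
    have h2 : ENNReal.ofReal (c * Real.exp (-((2:ℝ) ^ q) / 2)) * volume (Set.Icc (1 : ℝ) 2)
        ≤ ∫⁻ x in Set.Icc (1 : ℝ) 2,
        ENNReal.ofReal (c * Real.exp (-(|x| ^ q) / 2)) ∂volume := by
      rw [← setLIntegral_const]
      apply setLIntegral_mono
      · exact ENNReal.measurable_ofReal.comp ((Real.measurable_exp.comp
          ((measurable_abs.pow measurable_const).neg.div_const 2)).const_mul c)
      · intro x hx
        apply ENNReal.ofReal_le_ofReal
        apply mul_le_mul_of_nonneg_left _ hc.le
        apply Real.exp_le_exp.mpr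
        have hxq : |x| ^ q ≤ (2 : ℝ) ^ q :=
          Real.rpow_le_rpow (abs_nonneg x) (abs_le.mpr ⟨by linarith [hx.1], hx.2⟩) hq0.le
        linarith
    have hvol : volume (Set.Icc (1 : ℝ) 2) = 1 := by
      rw [Real.volume_Icc]; norm_num
    rw [hvol, mul_one] at h2
    calc (0 : ℝ≥0∞) < ENNReal.ofReal (c * Real.exp (-((2:ℝ) ^ q) / 2)) :=
          ENNReal.ofReal_pos.mpr (by positivity)
      _ ≤ _ := le_trans h2 h1
  have hppos : 0 < P[Y 0] := by
    rw [hmean]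
    exact ENNReal.toReal_pos hPpos.ne' (measure_ne_top P _)
  -- strong law of large numbers
  have hslln := ProbabilityTheory.strong_law_ae_real Y hint hpind hident
  filter_upwards [hslln] with ω hT hsum
  -- from summability of the given series, deduce summability of the Bernoulli series
  have key : ∀ n : ℕ, ((n : ℝ) + 1)⁻¹ * Y n ω ≤ κ *
      (((n : ℝ) + 1) ^ (t * q / (d : ℝ) + q / 2 - 1) *
        |((n : ℝ) + 1) ^ (-(s / (d : ℝ) + 1 / 2 - 1 / q)) * κ ^ (-(1 / q)) * ξ n ω| ^ q) := by
    intro n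
    have hn1 : (0 : ℝ) < (n : ℝ) + 1 := by positivity
    have hn1' : (1 : ℝ) ≤ (n : ℝ) + 1 := by simp
    set e2 : ℝ := s / (d : ℝ) + 1 / 2 - 1 / q with he2
    set x : ℝ := ξ n ω with hx
    have hA : (0 : ℝ) ≤ ((n : ℝ) + 1) ^ (-e2) := (Real.rpow_pos_of_pos hn1 _).le
    have hB : (0 : ℝ) ≤ κ ^ (-(1 / q)) := (Real.rpow_pos_of_pos hκ _).le
    have habs : |((n : ℝ) + 1) ^ (-e2) * κ ^ (-(1 / q)) * x|
        = ((n : ℝ) + 1) ^ (-e2) * κ ^ (-(1 / q)) * |x| := by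
      rw [abs_mul, abs_mul, abs_of_nonneg hA, abs_of_nonneg hB]
    have hpow : (((n : ℝ) + 1) ^ (-e2) * κ ^ (-(1 / q)) * |x|) ^ q
        = ((n : ℝ) + 1) ^ (-e2 * q) * κ⁻¹ * |x| ^ q := by
      rw [Real.mul_rpow (by positivity) (abs_nonneg x),
        Real.mul_rpow hA hB, ← Real.rpow_mul hn1.le, ← Real.rpow_mul hκ.le]
      congr 2
      rw [show -(1 / q) * q = (-1 : ℝ) by field_simp, Real.rpow_neg_one]
    have hE : (-1 : ℝ) ≤ (t * q / (d : ℝ) + q / 2 - 1) + (-e2 * q) := by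
      have : (t * q / (d : ℝ) + q / 2 - 1) + (-e2 * q) = (t - s) * q / d := by
        rw [he2]; field_simp; ring
      rw [this]
      rw [le_div_iff₀ hd0, neg_one_mul]
      have h1 : -((d : ℝ) / q) ≤ t - s := by linarith
      have h2 : -((d : ℝ) / q) * q ≤ (t - s) * q :=
        mul_le_mul_of_nonneg_right h1 hq0.le
      have h3 : -((d : ℝ) / q) * q = -(d : ℝ) := by field_simp
      linarith
    have hterm : ((n : ℝ) + 1) ^ (t * q / (d : ℝ) + q / 2 - 1) *
        |((n : ℝ) + 1) ^ (-e2) * κ ^ (-(1 / q)) * x| ^ q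
        = ((n : ℝ) + 1) ^ ((t * q / (d : ℝ) + q / 2 - 1) + (-e2 * q)) * (κ⁻¹ * |x| ^ q) := by
      rw [habs, hpow, Real.rpow_add hn1]
      ring
    rw [hterm]
    have hx_pow : Y n ω ≤ |x| ^ q := by
      simp only [hY, hg]
      split_ifs with h
      · exact Real.one_le_rpow h hq0.le
      · exact Real.rpow_nonneg (abs_nonneg x) q
    have hn_pow : ((n : ℝ) + 1)⁻¹ ≤ ((n : ℝ) + 1) ^ ((t * q / (d : ℝ) + q / 2 - 1) + (-e2 * q)) := by
      rw [← Real.rpow_neg_one]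
      exact Real.rpow_le_rpow_of_exponent_le hn1' hE
    calc ((n : ℝ) + 1)⁻¹ * Y n ω
        ≤ ((n : ℝ) + 1) ^ ((t * q / (d : ℝ) + q / 2 - 1) + (-e2 * q)) * |x| ^ q := by
          apply mul_le_mul hn_pow hx_pow (hYnn n ω) (by positivity)
      _ = κ * (((n : ℝ) + 1) ^ ((t * q / (d : ℝ) + q / 2 - 1) + (-e2 * q)) * (κ⁻¹ * |x| ^ q)) := by
          field_simp
    -- done
  have hsum' : Summable (fun n : ℕ => ((n : ℝ) + 1)⁻¹ * Y n ω) :=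
    Summable.of_nonneg_of_le (fun n => by positivity) key (hsum.mul_left κ)
  exact not_summable_of_cesaro hppos (fun n => hYnn n ω) hT hsum'
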